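/- arXiv:2401.15273 — 7 statements merged into one kernel-verified Lean document; each statement's English description precedes it below -/
import Mathlib

section
/- Let d ≥ 1 and let A₁, A₂ be real d×d matrices, b₁, b₂ ∈ ℝ^d, and θ₁, θ₂ ∈ ℝ^d satisfy A₁θ₁ + b₁ = 0 and A₂θ₂ + b₂ = 0. Let w, R, G, σ > 0, γ ∈ (0,1), L ≥ 0, ε_p ≥ 0, ε_r ≥ 0, and set H = R + (1+γ)G. Assume: (i) A₂ is invertible and its inverse has operator norm ‖A₂⁻¹‖ ≤ 1/(2w); (ii) ‖θ₁‖ ≤ G; (iii) ‖A₁ − A₂‖ ≤ (1+γ)σ(ε_p + L‖θ₁ − θ₂‖); (iv) ‖b₁ − b₂‖ ≤ R(ε_r + σε_p) + RLσ‖θ₁ − θ₂‖; (v) LHσ ≤ w. Then ‖θ₁ − θ₂‖ ≤ (Rε_r + Hσε_p)/w. -/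
set_option maxHeartbeats 1000000 in
/-- Perturbation bound on SARSA fixed points (abstract linear-algebraic core of
Theorem 1): if `A₁ θ₁ + b₁ = 0`, `A₂ θ₂ + b₂ = 0`, `A₂` is invertible with
`‖A₂⁻¹‖ ≤ 1/(2w)`, and the TD-operator differences are controlled by the
heterogeneity levels, then `‖θ₁ - θ₂‖ ≤ (R εᵣ + H σ εₚ)/w`. -/
theorem stmt0 {d : ℕ} (hd : 1 ≤ d)
    (A₁ A₂ B : EuclideanSpace ℝ (Fin d) →L[ℝ] EuclideanSpace ℝ (Fin d))
    (b₁ b₂ θ₁ θ₂ : EuclideanSpace ℝ (Fin d))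
    (w R G σ γ L εp εr H : ℝ)
    (hw : 0 < w) (hR : 0 < R) (hG : 0 < G) (hσ : 0 < σ)
    (hγ : γ ∈ Set.Ioo (0 : ℝ) 1) (hL : 0 ≤ L)
    (hεp : 0 ≤ εp) (hεr : 0 ≤ εr)
    (hH : H = R + (1 + γ) * G)
    (hfix1 : A₁ θ₁ + b₁ = 0) (hfix2 : A₂ θ₂ + b₂ = 0)
    (hBA : B.comp A₂ = ContinuousLinearMap.id ℝ (EuclideanSpace ℝ (Fin d)))
    (hAB : A₂.comp B = ContinuousLinearMap.id ℝ (EuclideanSpace ℝ (Fin d)))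
    (hBnorm : ‖B‖ ≤ 1 / (2 * w))
    (hθ₁ : ‖θ₁‖ ≤ G)
    (hA : ‖A₁ - A₂‖ ≤ (1 + γ) * σ * (εp + L * ‖θ₁ - θ₂‖))
    (hb : ‖b₁ - b₂‖ ≤ R * (εr + σ * εp) + R * L * σ * ‖θ₁ - θ₂‖)
    (hLHσ : L * H * σ ≤ w) :
    ‖θ₁ - θ₂‖ ≤ (R * εr + H * σ * εp) / w := by
  have h1 : A₂ (θ₁ - θ₂) = (b₂ - b₁) - (A₁ - A₂) θ₁ := by
    have e1 : A₁ θ₁ = -b₁ := by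
      have := hfix1; exact eq_neg_of_add_eq_zero_left this
    have e2 : A₂ θ₂ = -b₂ := by
      have := hfix2; exact eq_neg_of_add_eq_zero_left this
    simp only [map_sub, ContinuousLinearMap.sub_apply, e1, e2]
    abel
  have key : θ₁ - θ₂ = B ((b₂ - b₁) - (A₁ - A₂) θ₁) := by
    calc θ₁ - θ₂ = (B.comp A₂) (θ₁ - θ₂) := by rw [hBA]; rfl
    _ = B (A₂ (θ₁ - θ₂)) := rfl
    _ = B ((b₂ - b₁) - (A₁ - A₂) θ₁) := by rw [h1]
  set Δ := ‖θ₁ - θ₂‖ with hΔ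
  have hΔ0 : 0 ≤ Δ := norm_nonneg _
  have h2 : Δ ≤ ‖B‖ * (‖b₁ - b₂‖ + ‖A₁ - A₂‖ * ‖θ₁‖) := by
    calc Δ = ‖B ((b₂ - b₁) - (A₁ - A₂) θ₁)‖ := by rw [hΔ, key]
    _ ≤ ‖B‖ * ‖(b₂ - b₁) - (A₁ - A₂) θ₁‖ := B.le_opNorm _
    _ ≤ ‖B‖ * (‖b₂ - b₁‖ + ‖(A₁ - A₂) θ₁‖) := by
        gcongr; exact norm_sub_le _ _
    _ ≤ ‖B‖ * (‖b₁ - b₂‖ + ‖A₁ - A₂‖ * ‖θ₁‖) := by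
        have h5 : ‖(A₁ - A₂) θ₁‖ ≤ ‖A₁ - A₂‖ * ‖θ₁‖ := (A₁ - A₂).le_opNorm _
        have hr : ‖b₂ - b₁‖ = ‖b₁ - b₂‖ := norm_sub_rev _ _
        have hB0 : (0:ℝ) ≤ ‖B‖ := norm_nonneg _
        rw [hr]
        exact mul_le_mul_of_nonneg_left (by linarith) hB0
  have hB0 : 0 ≤ ‖B‖ := norm_nonneg _
  have hA0 : 0 ≤ ‖A₁ - A₂‖ := norm_nonneg _
  have h3 : Δ ≤ (1 / (2 * w)) * ((R * (εr + σ * εp) + R * L * σ * Δ) + ((1 + γ) * σ * (εp + L * Δ)) * G) := by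
    have hx : ‖b₁ - b₂‖ + ‖A₁ - A₂‖ * ‖θ₁‖ ≤ (R * (εr + σ * εp) + R * L * σ * Δ) + ((1 + γ) * σ * (εp + L * Δ)) * G := by
      have hθ0 : 0 ≤ ‖θ₁‖ := norm_nonneg _
      have hrhs : (0:ℝ) ≤ (1 + γ) * σ * (εp + L * Δ) := le_trans hA0 hA
      have := mul_le_mul hA hθ₁ hθ0 hrhs
      linarith [hb]
    calc Δ ≤ ‖B‖ * (‖b₁ - b₂‖ + ‖A₁ - A₂‖ * ‖θ₁‖) := h2
    _ ≤ (1 / (2 * w)) * ((R * (εr + σ * εp) + R * L * σ * Δ) + ((1 + γ) * σ * (εp + L * Δ)) * G) :=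
        mul_le_mul hBnorm hx (by positivity) (by positivity)
  have hγ1 : 0 < γ := hγ.1
  rw [le_div_iff₀ hw]
  have hw2 : (0:ℝ) < 2 * w := by linarith
  have h4 := mul_le_mul_of_nonneg_left h3 hw2.le
  have e : 2 * w * ((1 / (2 * w)) * ((R * (εr + σ * εp) + R * L * σ * Δ) + ((1 + γ) * σ * (εp + L * Δ)) * G))
      = (R * (εr + σ * εp) + R * L * σ * Δ) + ((1 + γ) * σ * (εp + L * Δ)) * G := by
    field_simp
  rw [e] at h4
  subst hH
  nlinarith [h4, mul_le_mul_of_nonneg_right hLHσ hΔ0, hγ1, hG, hσ, hR]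
end

section
/- Let (Ω, μ) be a probability space, d ≥ 1, γ ∈ [0,1), and let φ, ψ : Ω → ℝ^d be measurable with every coordinate square-integrable. Assume that for every x ∈ ℝ^d, ∫ ⟨φ(ω), x⟩² dμ(ω) = ∫ ⟨ψ(ω), x⟩² dμ(ω). Then for every x ∈ ℝ^d: γ·∫ ⟨φ(ω), x⟩·⟨ψ(ω), x⟩ dμ(ω) − ∫ ⟨φ(ω), x⟩² dμ(ω) ≤ −(1−γ)·∫ ⟨φ(ω), x⟩² dμ(ω). Consequently, if λ > 0 satisfies ∫ ⟨φ(ω), x⟩² dμ(ω) ≥ λ‖x‖² for all x, then the matrix Ā = ∫ φ(ω)(γψ(ω) − φ(ω))ᵀ dμ(ω) satisfies ⟨x, Āx⟩ ≤ −(1−γ)·λ·‖x‖² for all x ∈ ℝ^d. -/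
open MeasureTheory
open scoped Matrix

private lemma l2_mul_integrable {Ω : Type*} [MeasurableSpace Ω] {μ : Measure Ω}
    {f g : Ω → ℝ} (hf : MemLp f 2 μ) (hg : MemLp g 2 μ) :
    Integrable (fun ω => f ω * g ω) μ := by
  have hf2 := hf.integrable_sq
  have hg2 := hg.integrable_sq
  refine Integrable.mono' (((hf2.add hg2).div_const 2))
    (hf.aestronglyMeasurable.mul hg.aestronglyMeasurable) ?_
  filter_upwards with ω
  simp only [Pi.add_apply]
  rw [Real.norm_eq_abs, abs_mul]
  nlinarith [sq_nonneg (|f ω| - |g ω|), abs_nonneg (f ω), abs_nonneg (g ω),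
    sq_abs (f ω), sq_abs (g ω)]

private lemma l2_dot {d : ℕ} {Ω : Type*} [MeasurableSpace Ω] {μ : Measure Ω}
    {φ : Ω → Fin d → ℝ} (hφ2 : ∀ i, MemLp (fun ω => φ ω i) 2 μ)
    (x : Fin d → ℝ) : MemLp (fun ω => φ ω ⬝ᵥ x) 2 μ := by
  have : (fun ω => φ ω ⬝ᵥ x) = fun ω => ∑ i, x i * φ ω i := by
    funext ω; simp [dotProduct, mul_comm]
  rw [this]
  have h : MemLp (∑ i, fun ω => x i * φ ω i) 2 μ :=
    memLp_finset_sum' _ (fun i _ => (hφ2 i).const_mul (x i))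
  have he : (fun ω => ∑ i, x i * φ ω i) = ∑ i, fun ω => x i * φ ω i := by
    funext ω; simp
  rw [he]; exact h

/-- Negative definiteness of the mean-path TD operator (Tsitsiklis–Van Roy):
if `φ, ψ : Ω → ℝ^d` have equal second moments along every direction
(stationarity), then `γ E[⟨φ,x⟩⟨ψ,x⟩] − E[⟨φ,x⟩²] ≤ −(1−γ) E[⟨φ,x⟩²]`, and
consequently, if `E[⟨φ,x⟩²] ≥ λ ‖x‖²` for all `x`, then the matrix
`Ā = E[φ (γψ − φ)ᵀ]` satisfies `⟨x, Ā x⟩ ≤ −(1−γ) λ ‖x‖²`.  Here the Euclidean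
inner product is the dot product `⬝ᵥ` and `‖x‖² = x ⬝ᵥ x`. -/
theorem stmt3 {d : ℕ} (hd : 1 ≤ d) {Ω : Type*} [MeasurableSpace Ω]
    (μ : Measure Ω) [IsProbabilityMeasure μ]
    (γ : ℝ) (hγ : γ ∈ Set.Ico (0 : ℝ) 1)
    (φ ψ : Ω → Fin d → ℝ) (hφm : Measurable φ) (hψm : Measurable ψ)
    (hφ2 : ∀ i, MemLp (fun ω => φ ω i) 2 μ)
    (hψ2 : ∀ i, MemLp (fun ω => ψ ω i) 2 μ)
    (hstat : ∀ x : Fin d → ℝ,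
      ∫ ω, (φ ω ⬝ᵥ x) ^ 2 ∂μ = ∫ ω, (ψ ω ⬝ᵥ x) ^ 2 ∂μ) :
    (∀ x : Fin d → ℝ,
      γ * ∫ ω, (φ ω ⬝ᵥ x) * (ψ ω ⬝ᵥ x) ∂μ - ∫ ω, (φ ω ⬝ᵥ x) ^ 2 ∂μ ≤
        -((1 - γ) * ∫ ω, (φ ω ⬝ᵥ x) ^ 2 ∂μ)) ∧
    ∀ lam : ℝ, 0 < lam →
      (∀ x : Fin d → ℝ, lam * (x ⬝ᵥ x) ≤ ∫ ω, (φ ω ⬝ᵥ x) ^ 2 ∂μ) →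
      ∀ x : Fin d → ℝ,
        x ⬝ᵥ (Matrix.of fun i j =>
            ∫ ω, φ ω i * (γ * ψ ω j - φ ω j) ∂μ).mulVec x ≤
          -((1 - γ) * lam * (x ⬝ᵥ x)) := by
  obtain ⟨hγ0, hγ1⟩ := hγ
  -- key inequality: E[fg] ≤ E[f²]
  have key : ∀ x : Fin d → ℝ,
      ∫ ω, (φ ω ⬝ᵥ x) * (ψ ω ⬝ᵥ x) ∂μ ≤ ∫ ω, (φ ω ⬝ᵥ x) ^ 2 ∂μ := by
    intro x
    have hf := l2_dot hφ2 x
    have hg := l2_dot hψ2 x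
    have h1 : Integrable (fun ω => (φ ω ⬝ᵥ x) * (ψ ω ⬝ᵥ x)) μ := l2_mul_integrable hf hg
    have h2 := hf.integrable_sq
    have h3 := hg.integrable_sq
    have hmono : ∫ ω, (φ ω ⬝ᵥ x) * (ψ ω ⬝ᵥ x) ∂μ ≤
        ∫ ω, ((φ ω ⬝ᵥ x) ^ 2 + (ψ ω ⬝ᵥ x) ^ 2) / 2 ∂μ := by
      refine integral_mono h1 ((h2.add h3).div_const 2) ?_
      intro ω
      nlinarith [sq_nonneg (φ ω ⬝ᵥ x - ψ ω ⬝ᵥ x)]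
    calc ∫ ω, (φ ω ⬝ᵥ x) * (ψ ω ⬝ᵥ x) ∂μ
        ≤ ∫ ω, ((φ ω ⬝ᵥ x) ^ 2 + (ψ ω ⬝ᵥ x) ^ 2) / 2 ∂μ := hmono
      _ = ((∫ ω, (φ ω ⬝ᵥ x) ^ 2 ∂μ) + ∫ ω, (ψ ω ⬝ᵥ x) ^ 2 ∂μ) / 2 := by
          rw [integral_div, integral_add h2 h3]
      _ = ∫ ω, (φ ω ⬝ᵥ x) ^ 2 ∂μ := by rw [← hstat x]; ring
  have part1 : ∀ x : Fin d → ℝ,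
      γ * ∫ ω, (φ ω ⬝ᵥ x) * (ψ ω ⬝ᵥ x) ∂μ - ∫ ω, (φ ω ⬝ᵥ x) ^ 2 ∂μ ≤
        -((1 - γ) * ∫ ω, (φ ω ⬝ᵥ x) ^ 2 ∂μ) := by
    intro x
    have := mul_le_mul_of_nonneg_left (key x) hγ0
    linarith
  refine ⟨part1, ?_⟩
  intro lam hlam hlow x
  -- identify the quadratic form
  have hquad : x ⬝ᵥ (Matrix.of fun i j =>
      ∫ ω, φ ω i * (γ * ψ ω j - φ ω j) ∂μ).mulVec x =
      γ * (∫ ω, (φ ω ⬝ᵥ x) * (ψ ω ⬝ᵥ x) ∂μ) - ∫ ω, (φ ω ⬝ᵥ x) ^ 2 ∂μ := by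
    have hint : ∀ i j : Fin d,
        Integrable (fun ω => x i * (φ ω i * (γ * ψ ω j - φ ω j) * x j)) μ := by
      intro i j
      have h1 : Integrable (fun ω => φ ω i * ψ ω j) μ := l2_mul_integrable (hφ2 i) (hψ2 j)
      have h2 : Integrable (fun ω => φ ω i * φ ω j) μ := l2_mul_integrable (hφ2 i) (hφ2 j)
      have : Integrable (fun ω => φ ω i * (γ * ψ ω j - φ ω j)) μ := by
        have := (h1.const_mul γ).sub h2
        refine this.congr ?_
        filter_upwards with ω
        simp only [Pi.sub_apply]; ring
      exact (this.mul_const (x j)).const_mul (x i)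
    have expand : x ⬝ᵥ (Matrix.of fun i j =>
        ∫ ω, φ ω i * (γ * ψ ω j - φ ω j) ∂μ).mulVec x =
        ∑ i, ∑ j, ∫ ω, x i * (φ ω i * (γ * ψ ω j - φ ω j) * x j) ∂μ := by
      simp only [dotProduct, Matrix.mulVec, Matrix.of_apply]
      refine Finset.sum_congr rfl fun i _ => ?_
      rw [Finset.mul_sum]
      refine Finset.sum_congr rfl fun j _ => ?_
      rw [← integral_mul_const, ← integral_const_mul]
    rw [expand]
    have swap : ∑ i, ∑ j, ∫ ω, x i * (φ ω i * (γ * ψ ω j - φ ω j) * x j) ∂μ =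
        ∫ ω, ∑ i, ∑ j, x i * (φ ω i * (γ * ψ ω j - φ ω j) * x j) ∂μ := by
      rw [integral_finset_sum _ (fun i _ => integrable_finset_sum _ (fun j _ => hint i j))]
      exact Finset.sum_congr rfl fun i _ => (integral_finset_sum _ (fun j _ => hint i j)).symm
    rw [swap]
    have hptwise : ∀ ω, ∑ i, ∑ j, x i * (φ ω i * (γ * ψ ω j - φ ω j) * x j) =
        γ * ((φ ω ⬝ᵥ x) * (ψ ω ⬝ᵥ x)) - (φ ω ⬝ᵥ x) ^ 2 := by
      intro ω
      have hr : γ * ((φ ω ⬝ᵥ x) * (ψ ω ⬝ᵥ x)) - (φ ω ⬝ᵥ x) ^ 2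
          = (φ ω ⬝ᵥ x) * (γ * (ψ ω ⬝ᵥ x) - (φ ω ⬝ᵥ x)) := by ring
      rw [hr]
      simp only [dotProduct, Finset.mul_sum, ← Finset.sum_sub_distrib,
        Finset.sum_mul]
      rw [Finset.sum_comm]
      exact Finset.sum_congr rfl fun i _ => Finset.sum_congr rfl fun j _ => by ring
    simp_rw [hptwise]
    have hfg : Integrable (fun ω => (φ ω ⬝ᵥ x) * (ψ ω ⬝ᵥ x)) μ :=
      l2_mul_integrable (l2_dot hφ2 x) (l2_dot hψ2 x)
    have hff := (l2_dot hφ2 x).integrable_sq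
    rw [integral_sub (hfg.const_mul γ) hff, integral_const_mul]
  rw [hquad]
  have h1 := part1 x
  have h2 := hlow x
  nlinarith [mul_le_mul_of_nonneg_left h2 (le_of_lt (by linarith : (0:ℝ) < 1 - γ))]
end

section
/- Let d ≥ 1, let A be a map from ℝ^d to the real d×d matrices and b : ℝ^d → ℝ^d, and define g(θ) = A(θ)·θ + b(θ). Fix θ* ∈ ℝ^d, and constants w, R, G, σ > 0, γ ∈ (0,1), L ≥ 0, with H = R + (1+γ)G. Assume: (i) ⟨x, A(θ*)x⟩ ≤ −2w‖x‖² for all x ∈ ℝ^d; (ii) for all θ, the operator norm ‖A(θ) − A(θ*)‖ ≤ (1+γ)Lσ‖θ − θ*‖; (iii) for all θ, ‖b(θ) − b(θ*)‖ ≤ RLσ‖θ − θ*‖; (iv) LσH ≤ w. Then for every θ with ‖θ‖ ≤ G: ⟨θ − θ*, g(θ) − g(θ*)⟩ ≤ −w·‖θ − θ*‖². -/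
open scoped RealInnerProductSpace

/-- Descent-direction lemma (abstract form): for the mean-path semi-gradient
`g θ = A θ θ + b θ` with fixed point `θ*`, negative definiteness of `A θ*`
(with constant `2w`), Lipschitz-type bounds on the TD-operator differences,
and the smallness condition `L σ H ≤ w`, one has
`⟨θ − θ*, g θ − g θ*⟩ ≤ −w ‖θ − θ*‖²` for every `θ` with `‖θ‖ ≤ G`. -/
theorem stmt4 {d : ℕ} (hd : 1 ≤ d)
    (A : EuclideanSpace ℝ (Fin d) →
      (EuclideanSpace ℝ (Fin d) →L[ℝ] EuclideanSpace ℝ (Fin d)))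
    (b : EuclideanSpace ℝ (Fin d) → EuclideanSpace ℝ (Fin d))
    (g : EuclideanSpace ℝ (Fin d) → EuclideanSpace ℝ (Fin d))
    (hg : ∀ θ, g θ = A θ θ + b θ)
    (θstar : EuclideanSpace ℝ (Fin d))
    (w R G σ γ L H : ℝ)
    (hw : 0 < w) (hR : 0 < R) (hG : 0 < G) (hσ : 0 < σ)
    (hγ : γ ∈ Set.Ioo (0 : ℝ) 1) (hL : 0 ≤ L)
    (hH : H = R + (1 + γ) * G)
    (hneg : ∀ x : EuclideanSpace ℝ (Fin d),
      ⟪x, A θstar x⟫ ≤ -(2 * w * ‖x‖ ^ 2))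
    (hAdiff : ∀ θ, ‖A θ - A θstar‖ ≤ (1 + γ) * L * σ * ‖θ - θstar‖)
    (hbdiff : ∀ θ, ‖b θ - b θstar‖ ≤ R * L * σ * ‖θ - θstar‖)
    (hLσH : L * σ * H ≤ w) :
    ∀ θ : EuclideanSpace ℝ (Fin d), ‖θ‖ ≤ G →
      ⟪θ - θstar, g θ - g θstar⟫ ≤ -(w * ‖θ - θstar‖ ^ 2) := by
  intro θ hθ
  set x := θ - θstar with hx
  have hdecomp : g θ - g θstar = A θstar x + ((A θ - A θstar) θ + (b θ - b θstar)) := by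
    rw [hg, hg]
    simp only [ContinuousLinearMap.sub_apply, hx, map_sub]
    abel
  have hnx : (0:ℝ) ≤ ‖x‖ := norm_nonneg _
  have h2 : ⟪x, (A θ - A θstar) θ⟫ ≤ (1 + γ) * L * σ * ‖x‖ * G * ‖x‖ := by
    calc ⟪x, (A θ - A θstar) θ⟫ ≤ ‖x‖ * ‖(A θ - A θstar) θ‖ := real_inner_le_norm _ _
    _ ≤ ‖x‖ * (‖A θ - A θstar‖ * ‖θ‖) :=
        mul_le_mul_of_nonneg_left ((A θ - A θstar).le_opNorm θ) hnx
    _ ≤ ‖x‖ * (((1 + γ) * L * σ * ‖x‖) * G) := by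
        apply mul_le_mul_of_nonneg_left _ hnx
        exact mul_le_mul (hAdiff θ) hθ (norm_nonneg _)
          (mul_nonneg (mul_nonneg (mul_nonneg (by linarith [hγ.1.le] : (0:ℝ) ≤ 1 + γ) hL) hσ.le) hnx)
    _ = (1 + γ) * L * σ * ‖x‖ * G * ‖x‖ := by ring
  have h3 : ⟪x, b θ - b θstar⟫ ≤ R * L * σ * ‖x‖ * ‖x‖ := by
    calc ⟪x, b θ - b θstar⟫ ≤ ‖x‖ * ‖b θ - b θstar‖ := real_inner_le_norm _ _
    _ ≤ ‖x‖ * (R * L * σ * ‖x‖) := mul_le_mul_of_nonneg_left (hbdiff θ) hnx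
    _ = R * L * σ * ‖x‖ * ‖x‖ := by ring
  have key : ⟪x, g θ - g θstar⟫ ≤ -(2 * w * ‖x‖ ^ 2) + L * σ * H * ‖x‖ ^ 2 := by
    rw [hdecomp, inner_add_right, inner_add_right]
    have h1 := hneg x
    have hsq : ‖x‖ ^ 2 = ‖x‖ * ‖x‖ := sq ‖x‖
    rw [hH]
    nlinarith [h1, h2, h3, hsq]
  have hfin : L * σ * H * ‖x‖ ^ 2 ≤ w * ‖x‖ ^ 2 :=
    mul_le_mul_of_nonneg_right hLσH (by positivity)
  calc ⟪x, g θ - g θstar⟫ ≤ -(2 * w * ‖x‖ ^ 2) + L * σ * H * ‖x‖ ^ 2 := key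
  _ ≤ -(2 * w * ‖x‖ ^ 2) + w * ‖x‖ ^ 2 := by linarith
  _ = -(w * ‖x‖ ^ 2) := by ring
end

section
/- Let k ≥ 1 be a natural number and α, H ≥ 0 real numbers with 16·k²·α² ≤ 1. Let Ω : ℕ → ℝ be a nonnegative sequence with Ω(0) = 0 such that for every j with 1 ≤ j ≤ k, Ω(j) ≤ 2kα²·(kH² + 4·Σ_{l=0}^{j−1} Ω(l)). Then Ω(k) ≤ 4·k²·H²·α². -/
/-- Recursive client-drift bound: if `Ω 0 = 0`, `Ω` is nonnegative, and for
every `1 ≤ j ≤ k` one has `Ω j ≤ 2 k α² (k H² + 4 ∑_{l<j} Ω l)`, with the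
step-size restriction `16 k² α² ≤ 1`, then `Ω k ≤ 4 k² H² α²`. -/
theorem stmt7 (k : ℕ) (hk : 1 ≤ k) (α H : ℝ) (hα : 0 ≤ α) (hH : 0 ≤ H)
    (hstep : 16 * (k : ℝ) ^ 2 * α ^ 2 ≤ 1)
    (Om : ℕ → ℝ) (hnonneg : ∀ j, 0 ≤ Om j) (h0 : Om 0 = 0)
    (hrec : ∀ j, 1 ≤ j → j ≤ k →
      Om j ≤ 2 * (k : ℝ) * α ^ 2 *
        ((k : ℝ) * H ^ 2 + 4 * ∑ l ∈ Finset.range j, Om l)) :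
    Om k ≤ 4 * (k : ℝ) ^ 2 * H ^ 2 * α ^ 2 := by
  have key : ∀ j, j ≤ k → Om j ≤ 4 * (k : ℝ) ^ 2 * H ^ 2 * α ^ 2 := by
    intro j
    induction j using Nat.strong_induction_on with
    | _ j ih =>
      intro hjk
      rcases Nat.eq_zero_or_pos j with h | h
      · subst h; rw [h0]; positivity
      · have hsum : ∑ l ∈ Finset.range j, Om l
            ≤ (j : ℝ) * (4 * (k : ℝ) ^ 2 * H ^ 2 * α ^ 2) := by
          calc ∑ l ∈ Finset.range j, Om l
              ≤ ∑ l ∈ Finset.range j, (4 * (k : ℝ) ^ 2 * H ^ 2 * α ^ 2) :=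
                Finset.sum_le_sum fun l hl =>
                  ih l (Finset.mem_range.mp hl)
                    (le_trans (Nat.le_of_lt (Finset.mem_range.mp hl)) hjk)
            _ = (j : ℝ) * (4 * (k : ℝ) ^ 2 * H ^ 2 * α ^ 2) := by
                simp [Finset.sum_const, Finset.card_range]
        have hrj := hrec j h hjk
        have hjkR : (j : ℝ) ≤ (k : ℝ) := Nat.cast_le.mpr hjk
        have hkR : (1 : ℝ) ≤ (k : ℝ) := by exact_mod_cast hk
        have h1 := mul_le_mul_of_nonneg_left hstep
          (show (0:ℝ) ≤ 2 * (k:ℝ)^2 * H^2 * α^2 by positivity)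
        have h2 := mul_le_mul_of_nonneg_left hsum
          (show (0:ℝ) ≤ 8 * (k:ℝ) * α^2 by positivity)
        have h3 := mul_le_mul_of_nonneg_left hjkR
          (show (0:ℝ) ≤ 32 * (k:ℝ)^3 * H^2 * α^4 by positivity)
        nlinarith [h1, h2, h3]
  exact key k le_rfl
end

section
/- Let w > 0 and a ≥ 1 be real, T a natural number, and define α_t = 4/(w·(a + t + 1)). Let e, B : ℕ → ℝ be nonnegative sequences satisfying e(t+1) ≤ (1 − α_t·w)·e(t) + α_t·B(t) for all t ≤ T. Then Σ_{t=0}^{T} (a + t)·e(t) ≤ (a(a−1)/2)·e(0) + (2/w)·Σ_{t=0}^{T} (a + t)·B(t). -/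
/-- Weighted telescoping estimate for a linearly decaying step-size
`α_t = 4 / (w (a + t + 1))`: if `e (t+1) ≤ (1 − α_t w) e t + α_t B t` for all
`t ≤ T`, then `∑_{t=0}^{T} (a+t) e t ≤ (a(a−1)/2) e 0 + (2/w) ∑_{t=0}^{T} (a+t) B t`. -/
theorem stmt9 (w a : ℝ) (hw : 0 < w) (ha : 1 ≤ a) (T : ℕ)
    (α : ℕ → ℝ) (hα : ∀ t, α t = 4 / (w * (a + t + 1)))
    (e B : ℕ → ℝ) (he : ∀ t, 0 ≤ e t) (hB : ∀ t, 0 ≤ B t)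
    (hrec : ∀ t ≤ T, e (t + 1) ≤ (1 - α t * w) * e t + α t * B t) :
    ∑ t ∈ Finset.range (T + 1), (a + t) * e t ≤
      a * (a - 1) / 2 * e 0 +
        (2 / w) * ∑ t ∈ Finset.range (T + 1), (a + t) * B t := by
  set f : ℕ → ℝ := fun t => (a + t) * (a + t - 1) / 2 * e t with hf
  have key : ∀ t ≤ T, (a + t) * e t ≤ f t - f (t + 1) + (2 / w) * ((a + t) * B t) := by
    intro t ht
    have hx : (1:ℝ) ≤ a + t := le_add_of_le_of_nonneg ha (Nat.cast_nonneg t)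
    have hx1 : (0:ℝ) < a + t + 1 := by linarith
    have hαw : α t * w = 4 / (a + t + 1) := by
      rw [hα]; field_simp
    have hαB : α t = 4 / (w * (a + t + 1)) := hα t
    have hr := hrec t ht
    rw [hαw, hαB] at hr
    have hmul := mul_le_mul_of_nonneg_left hr
      (by positivity : (0:ℝ) ≤ (a + t) * (a + t + 1) / 2)
    have hrhs : (a + t) * (a + t + 1) / 2 *
        ((1 - 4 / (a + t + 1)) * e t + 4 / (w * (a + t + 1)) * B t)
        = (a + t) * (a + t - 3) / 2 * e t + (2 / w) * ((a + t) * B t) := by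
      field_simp
      ring
    rw [hrhs] at hmul
    have hf1 : f (t + 1) = (a + t + 1) * (a + t) / 2 * e (t + 1) := by
      simp only [hf]
      push_cast
      ring_nf
    have hf0 : f t = (a + t) * (a + t - 1) / 2 * e t := rfl
    rw [hf0, hf1]
    nlinarith [hmul]
  calc ∑ t ∈ Finset.range (T + 1), (a + t) * e t
      ≤ ∑ t ∈ Finset.range (T + 1), (f t - f (t + 1) + (2 / w) * ((a + t) * B t)) := by
        refine Finset.sum_le_sum fun t ht => key t ?_
        exact Nat.lt_succ_iff.mp (Finset.mem_range.mp ht)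
    _ = (f 0 - f (T + 1)) + (2 / w) * ∑ t ∈ Finset.range (T + 1), (a + t) * B t := by
        rw [Finset.sum_add_distrib, Finset.sum_range_sub' f, ← Finset.mul_sum]
    _ ≤ a * (a - 1) / 2 * e 0 + (2 / w) * ∑ t ∈ Finset.range (T + 1), (a + t) * B t := by
        have hfT : 0 ≤ f (T + 1) := by
          have hx : (1:ℝ) ≤ a + (T + 1 : ℕ) := le_add_of_le_of_nonneg ha (Nat.cast_nonneg _)
          have : (0:ℝ) ≤ (a + (T+1:ℕ)) * (a + (T+1:ℕ) - 1) / 2 := by nlinarith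
          exact mul_nonneg this (he _)
        have hf0 : f 0 = a * (a - 1) / 2 * e 0 := by simp [hf]
        linarith
end

section
/- Let w > 0 and a ≥ 1 be real, T a natural number, c₁, c₂, c₃, c₄ ≥ 0, and define α_t = 4/(w·(a + t + 1)). Let e : ℕ → ℝ be a nonnegative sequence satisfying e(t+1) ≤ (1 − α_t·w)·e(t) + α_t·c₁ + α_t²·c₂ + α_t³·c₃ + α_t⁴·c₄ for all t ≤ T, and set C = Σ_{t=0}^{T} (a + t). Then (1/C)·Σ_{t=0}^{T} (a + t)·e(t) ≤ (a(a−1)/(2C))·e(0) + 2c₁/w + (8c₂/(w²·C))·(T+1) + (32c₃/(w³·C))·Σ_{t=0}^{T} 1/(a+t+1) + (128c₄/(w⁴·C))·Σ_{t=0}^{T} 1/(a+t+1)². -/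
set_option maxHeartbeats 1600000 in
/-- Full quantitative form of the finite-time error bound for a linearly
decaying step-size `α_t = 4 / (w (a + t + 1))`: the weighted average of the
errors `e t` (controlling the convex-combination iterate) is bounded by the
initial-error term, the heterogeneity term `2 c₁ / w`, the `O(1/N)` variance
term, and higher-order terms. -/
theorem stmt10 (w a : ℝ) (hw : 0 < w) (ha : 1 ≤ a) (T : ℕ)
    (c₁ c₂ c₃ c₄ : ℝ) (hc₁ : 0 ≤ c₁) (hc₂ : 0 ≤ c₂) (hc₃ : 0 ≤ c₃) (hc₄ : 0 ≤ c₄)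
    (α : ℕ → ℝ) (hα : ∀ t, α t = 4 / (w * (a + t + 1)))
    (e : ℕ → ℝ) (he : ∀ t, 0 ≤ e t)
    (hrec : ∀ t ≤ T, e (t + 1) ≤ (1 - α t * w) * e t +
      α t * c₁ + (α t) ^ 2 * c₂ + (α t) ^ 3 * c₃ + (α t) ^ 4 * c₄)
    (C : ℝ) (hC : C = ∑ t ∈ Finset.range (T + 1), (a + t)) :
    (1 / C) * ∑ t ∈ Finset.range (T + 1), (a + t) * e t ≤
      a * (a - 1) / (2 * C) * e 0 + 2 * c₁ / w +
        (8 * c₂ / (w ^ 2 * C)) * (T + 1) +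
        (32 * c₃ / (w ^ 3 * C)) * ∑ t ∈ Finset.range (T + 1), 1 / (a + t + 1) +
        (128 * c₄ / (w ^ 4 * C)) *
          ∑ t ∈ Finset.range (T + 1), 1 / (a + t + 1) ^ 2 := by
  have hw' : w ≠ 0 := ne_of_gt hw
  set s : ℕ → ℝ := fun t => (a + t) * (a + t - 1) / 4 * e t with hs
  have hx : ∀ t : ℕ, (1 : ℝ) ≤ a + t := by
    intro t
    have : (0 : ℝ) ≤ t := Nat.cast_nonneg t
    linarith
  set B : ℕ → ℝ := fun t => (a + t) * c₁ / w + 4 * c₂ / w ^ 2 +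
      16 * c₃ / (w ^ 3 * (a + t + 1)) + 64 * c₄ / (w ^ 4 * (a + t + 1) ^ 2) with hB
  have key : ∀ t ≤ T, (a + t) / 2 * e t ≤ s t - s (t + 1) + B t := by
    intro t ht
    have hx1 : (0 : ℝ) < a + t := lt_of_lt_of_le one_pos (hx t)
    have hx2 : (0 : ℝ) < a + t + 1 := by linarith
    have hα' : α t = 4 / (w * (a + t + 1)) := hα t
    have h := hrec t ht
    have hm : (0 : ℝ) ≤ (a + t + 1) * (a + t) / 4 := by positivity
    have h2 := mul_le_mul_of_nonneg_left h hm
    have hA : (a + t + 1) * (a + t) / 4 * ((1 - α t * w) * e t) =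
        ((a + t) * (a + t - 1) / 4 - (a + t) / 2) * e t := by
      rw [hα']; field_simp; ring
    have hBq : (a + t + 1) * (a + t) / 4 * (α t * c₁) = (a + t) * c₁ / w := by
      rw [hα']; field_simp
    have hCq : (a + t + 1) * (a + t) / 4 * ((α t) ^ 2 * c₂) ≤ 4 * c₂ / w ^ 2 := by
      rw [hα']
      have heq : (a + t + 1) * (a + t) / 4 * ((4 / (w * (a + t + 1))) ^ 2 * c₂) =
          4 * (a + t) / (w ^ 2 * (a + t + 1)) * c₂ := by field_simp
      rw [heq]
      have hco : 4 * (a + t) / (w ^ 2 * (a + t + 1)) ≤ 4 / w ^ 2 := by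
        have h1 : 4 * (a + t) / (w ^ 2 * (a + t + 1)) =
            4 / w ^ 2 * ((a + t) / (a + t + 1)) := by
          field_simp
        rw [h1]
        have h2 : (a + t) / (a + t + 1) ≤ 1 := (div_le_one hx2).mpr (by linarith)
        calc 4 / w ^ 2 * ((a + t) / (a + t + 1)) ≤ 4 / w ^ 2 * 1 :=
              mul_le_mul_of_nonneg_left h2 (by positivity)
          _ = 4 / w ^ 2 := mul_one _
      calc 4 * (a + t) / (w ^ 2 * (a + t + 1)) * c₂ ≤ 4 / w ^ 2 * c₂ :=
            mul_le_mul_of_nonneg_right hco hc₂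
        _ = 4 * c₂ / w ^ 2 := by ring
    have hDq : (a + t + 1) * (a + t) / 4 * ((α t) ^ 3 * c₃) ≤
        16 * c₃ / (w ^ 3 * (a + t + 1)) := by
      rw [hα']
      have heq : (a + t + 1) * (a + t) / 4 * ((4 / (w * (a + t + 1))) ^ 3 * c₃) =
          16 * (a + t) / (w ^ 3 * (a + t + 1) ^ 2) * c₃ := by field_simp; ring
      rw [heq]
      have hco : 16 * (a + t) / (w ^ 3 * (a + t + 1) ^ 2) ≤ 16 / (w ^ 3 * (a + t + 1)) := by
        have h1 : 16 * (a + t) / (w ^ 3 * (a + t + 1) ^ 2) =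
            16 / (w ^ 3 * (a + t + 1)) * ((a + t) / (a + t + 1)) := by
          field_simp
        rw [h1]
        have h2 : (a + t) / (a + t + 1) ≤ 1 := (div_le_one hx2).mpr (by linarith)
        calc 16 / (w ^ 3 * (a + t + 1)) * ((a + t) / (a + t + 1))
            ≤ 16 / (w ^ 3 * (a + t + 1)) * 1 :=
              mul_le_mul_of_nonneg_left h2 (by positivity)
          _ = 16 / (w ^ 3 * (a + t + 1)) := mul_one _
      calc 16 * (a + t) / (w ^ 3 * (a + t + 1) ^ 2) * c₃
          ≤ 16 / (w ^ 3 * (a + t + 1)) * c₃ := mul_le_mul_of_nonneg_right hco hc₃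
        _ = 16 * c₃ / (w ^ 3 * (a + t + 1)) := by ring
    have hEq : (a + t + 1) * (a + t) / 4 * ((α t) ^ 4 * c₄) ≤
        64 * c₄ / (w ^ 4 * (a + t + 1) ^ 2) := by
      rw [hα']
      have heq : (a + t + 1) * (a + t) / 4 * ((4 / (w * (a + t + 1))) ^ 4 * c₄) =
          64 * (a + t) / (w ^ 4 * (a + t + 1) ^ 3) * c₄ := by field_simp; ring
      rw [heq]
      have hco : 64 * (a + t) / (w ^ 4 * (a + t + 1) ^ 3) ≤
          64 / (w ^ 4 * (a + t + 1) ^ 2) := by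
        have h1 : 64 * (a + t) / (w ^ 4 * (a + t + 1) ^ 3) =
            64 / (w ^ 4 * (a + t + 1) ^ 2) * ((a + t) / (a + t + 1)) := by
          field_simp
        rw [h1]
        have h2 : (a + t) / (a + t + 1) ≤ 1 := (div_le_one hx2).mpr (by linarith)
        calc 64 / (w ^ 4 * (a + t + 1) ^ 2) * ((a + t) / (a + t + 1))
            ≤ 64 / (w ^ 4 * (a + t + 1) ^ 2) * 1 :=
              mul_le_mul_of_nonneg_left h2 (by positivity)
          _ = 64 / (w ^ 4 * (a + t + 1) ^ 2) := mul_one _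
      calc 64 * (a + t) / (w ^ 4 * (a + t + 1) ^ 3) * c₄
          ≤ 64 / (w ^ 4 * (a + t + 1) ^ 2) * c₄ := mul_le_mul_of_nonneg_right hco hc₄
        _ = 64 * c₄ / (w ^ 4 * (a + t + 1) ^ 2) := by ring
    have hst1 : s (t + 1) = (a + t + 1) * (a + t) / 4 * e (t + 1) := by
      simp only [hs]; push_cast; ring
    have hst : s t = (a + t) * (a + t - 1) / 4 * e t := rfl
    have hdist : (a + t + 1) * (a + t) / 4 * ((1 - α t * w) * e t +
        α t * c₁ + (α t) ^ 2 * c₂ + (α t) ^ 3 * c₃ + (α t) ^ 4 * c₄) =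
        (a + t + 1) * (a + t) / 4 * ((1 - α t * w) * e t) +
        (a + t + 1) * (a + t) / 4 * (α t * c₁) +
        (a + t + 1) * (a + t) / 4 * ((α t) ^ 2 * c₂) +
        (a + t + 1) * (a + t) / 4 * ((α t) ^ 3 * c₃) +
        (a + t + 1) * (a + t) / 4 * ((α t) ^ 4 * c₄) := by ring
    rw [hdist, hA] at h2
    simp only [hB]
    rw [hst1, hst]
    linarith [h2, hBq, hCq, hDq, hEq]
  have hsum : ∑ t ∈ Finset.range (T + 1), (a + t) / 2 * e t ≤
      ∑ t ∈ Finset.range (T + 1), (s t - s (t + 1) + B t) := by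
    apply Finset.sum_le_sum
    intro t htmem
    exact key t (Nat.lt_succ_iff.mp (Finset.mem_range.mp htmem))
  rw [Finset.sum_add_distrib, Finset.sum_range_sub' s (T + 1)] at hsum
  have hsT1 : 0 ≤ s (T + 1) := by
    have h1 : (1 : ℝ) ≤ a + (T + 1 : ℕ) := hx (T + 1)
    have := he (T + 1)
    simp only [hs]
    have : (0 : ℝ) ≤ (a + (T + 1 : ℕ)) * (a + (T + 1 : ℕ) - 1) / 4 := by
      have : (0 : ℝ) ≤ a + (T + 1 : ℕ) - 1 := by linarith
      positivity
    exact mul_nonneg this (he (T + 1))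
  have hs0 : s 0 = a * (a - 1) / 4 * e 0 := by simp [hs]
  have hBsum : ∑ t ∈ Finset.range (T + 1), B t =
      C * (c₁ / w) + (T + 1) * (4 * c₂ / w ^ 2) +
      (16 * c₃ / w ^ 3) * ∑ t ∈ Finset.range (T + 1), 1 / (a + t + 1) +
      (64 * c₄ / w ^ 4) * ∑ t ∈ Finset.range (T + 1), 1 / (a + t + 1) ^ 2 := by
    simp only [hB]
    rw [hC]
    rw [Finset.sum_add_distrib, Finset.sum_add_distrib, Finset.sum_add_distrib]
    rw [Finset.sum_mul, Finset.mul_sum, Finset.mul_sum]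
    congr 1
    congr 1
    congr 1
    · exact Finset.sum_congr rfl fun t _ => by ring
    · simp [Finset.sum_const, Finset.card_range]
    · exact Finset.sum_congr rfl fun t _ => by rw [mul_one_div, div_div]
    · exact Finset.sum_congr rfl fun t _ => by rw [mul_one_div, div_div]
  have main : ∑ t ∈ Finset.range (T + 1), (a + t) * e t ≤
      a * (a - 1) / 2 * e 0 + 2 * c₁ / w * C + 8 * c₂ / w ^ 2 * (T + 1) +
      32 * c₃ / w ^ 3 * ∑ t ∈ Finset.range (T + 1), 1 / (a + t + 1) +
      128 * c₄ / w ^ 4 * ∑ t ∈ Finset.range (T + 1), 1 / (a + t + 1) ^ 2 := by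
    have hhalf : ∑ t ∈ Finset.range (T + 1), (a + t) * e t =
        2 * ∑ t ∈ Finset.range (T + 1), (a + t) / 2 * e t := by
      rw [Finset.mul_sum]
      exact Finset.sum_congr rfl fun t _ => by ring
    rw [hBsum, hs0] at hsum
    calc ∑ t ∈ Finset.range (T + 1), (a + t) * e t
        = 2 * ∑ t ∈ Finset.range (T + 1), (a + t) / 2 * e t := hhalf
      _ ≤ 2 * (a * (a - 1) / 4 * e 0 +
          (C * (c₁ / w) + (T + 1) * (4 * c₂ / w ^ 2) +
            16 * c₃ / w ^ 3 * ∑ t ∈ Finset.range (T + 1), 1 / (a + t + 1) +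
            64 * c₄ / w ^ 4 * ∑ t ∈ Finset.range (T + 1), 1 / (a + t + 1) ^ 2)) := by
          linarith
      _ = a * (a - 1) / 2 * e 0 + 2 * c₁ / w * C + 8 * c₂ / w ^ 2 * (T + 1) +
          32 * c₃ / w ^ 3 * ∑ t ∈ Finset.range (T + 1), 1 / (a + t + 1) +
          128 * c₄ / w ^ 4 * ∑ t ∈ Finset.range (T + 1), 1 / (a + t + 1) ^ 2 := by
          ring
  have hCpos : 0 < C := by
    rw [hC]
    apply Finset.sum_pos
    · intro t _
      exact lt_of_lt_of_le one_pos (hx t)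
    · exact Finset.nonempty_range_add_one
  have hC' : C ≠ 0 := ne_of_gt hCpos
  have h1C : (0 : ℝ) ≤ 1 / C := by positivity
  have := mul_le_mul_of_nonneg_left main h1C
  calc (1 / C) * ∑ t ∈ Finset.range (T + 1), (a + t) * e t
      ≤ (1 / C) * (a * (a - 1) / 2 * e 0 + 2 * c₁ / w * C + 8 * c₂ / w ^ 2 * (T + 1) +
        32 * c₃ / w ^ 3 * ∑ t ∈ Finset.range (T + 1), 1 / (a + t + 1) +
        128 * c₄ / w ^ 4 * ∑ t ∈ Finset.range (T + 1), 1 / (a + t + 1) ^ 2) := this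
    _ = a * (a - 1) / (2 * C) * e 0 + 2 * c₁ / w +
        (8 * c₂ / (w ^ 2 * C)) * (T + 1) +
        (32 * c₃ / (w ^ 3 * C)) * ∑ t ∈ Finset.range (T + 1), 1 / (a + t + 1) +
        (128 * c₄ / (w ^ 4 * C)) *
          ∑ t ∈ Finset.range (T + 1), 1 / (a + t + 1) ^ 2 := by
        have e1 : 1 / C * (a * (a - 1) / 2 * e 0) = a * (a - 1) / (2 * C) * e 0 := by
          field_simp
        have e2 : 1 / C * (2 * c₁ / w * C) = 2 * c₁ / w := by field_simp
        have e3 : ∀ S : ℝ, 1 / C * (8 * c₂ / w ^ 2 * S) = 8 * c₂ / (w ^ 2 * C) * S := by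
          intro S; field_simp
        have e4 : ∀ S : ℝ, 1 / C * (32 * c₃ / w ^ 3 * S) = 32 * c₃ / (w ^ 3 * C) * S := by
          intro S; field_simp
        have e5 : ∀ S : ℝ, 1 / C * (128 * c₄ / w ^ 4 * S) = 128 * c₄ / (w ^ 4 * C) * S := by
          intro S; field_simp
        rw [mul_add, mul_add, mul_add, mul_add, e1, e2, e3, e4, e5]
  done
end

section
/- Let S and A be finite types. Let μ₁, μ₂ : S × A → ℝ be nonnegative with Σ_{(s,a)} μ₁(s,a) = 1 and Σ_{(s,a)} μ₂(s,a) = 1. For each a ∈ A let P¹_a and P²_a be S×S real matrices with nonnegative entries whose rows each sum to 1, and let π : S → A → ℝ be nonnegative with Σ_{a'} π(s')(a') = 1 for every s'. Define φ_i(s,a,s',a') = μ_i(s,a)·P^i_a(s,s')·π(s')(a'). Then Σ_{s,a,s',a'} |φ₁(s,a,s',a') − φ₂(s,a,s',a')| ≤ Σ_{s,a} |μ₁(s,a) − μ₂(s,a)| + max_{(s,a)} Σ_{s'} |P¹_a(s,s') − P²_a(s,s')|. -/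
/-- Two-step steady distribution comparison: for probability vectors `μ₁, μ₂`
on `S × A`, stochastic kernels `P¹, P²`, and a policy `π`, the ℓ¹ distance
between the two-step distributions
`φ_i(s,a,s',a') = μ_i(s,a) · Pⁱ_a(s,s') · π s' a'` is at most the ℓ¹ distance
of the state-action distributions plus the maximal row-ℓ¹ distance between the
kernels. -/
theorem stmt16 {S A : Type*} [Fintype S] [Fintype A] [Nonempty S] [Nonempty A]
    (μ₁ μ₂ : S × A → ℝ) (hμ₁pos : ∀ p, 0 ≤ μ₁ p) (hμ₂pos : ∀ p, 0 ≤ μ₂ p)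
    (hμ₁sum : ∑ p, μ₁ p = 1) (hμ₂sum : ∑ p, μ₂ p = 1)
    (P₁ P₂ : A → Matrix S S ℝ)
    (hP₁pos : ∀ a s s', 0 ≤ P₁ a s s') (hP₂pos : ∀ a s s', 0 ≤ P₂ a s s')
    (hP₁row : ∀ a s, ∑ s', P₁ a s s' = 1) (hP₂row : ∀ a s, ∑ s', P₂ a s s' = 1)
    (π : S → A → ℝ) (hπpos : ∀ s a, 0 ≤ π s a) (hπsum : ∀ s', ∑ a', π s' a' = 1)
    (φ₁ φ₂ : S → A → S → A → ℝ)
    (hφ₁ : ∀ s a s' a', φ₁ s a s' a' = μ₁ (s, a) * P₁ a s s' * π s' a')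
    (hφ₂ : ∀ s a s' a', φ₂ s a s' a' = μ₂ (s, a) * P₂ a s s' * π s' a') :
    ∑ s, ∑ a, ∑ s', ∑ a', |φ₁ s a s' a' - φ₂ s a s' a'| ≤
      (∑ s, ∑ a, |μ₁ (s, a) - μ₂ (s, a)|) +
        Finset.univ.sup' Finset.univ_nonempty
          (fun p : S × A => ∑ s', |P₁ p.2 p.1 s' - P₂ p.2 p.1 s'|) := by
  set M : ℝ := Finset.univ.sup' Finset.univ_nonempty
      (fun p : S × A => ∑ s', |P₁ p.2 p.1 s' - P₂ p.2 p.1 s'|) with hM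
  have key : ∀ s a s' a', |φ₁ s a s' a' - φ₂ s a s' a'| ≤
      |μ₁ (s, a) - μ₂ (s, a)| * P₁ a s s' * π s' a'
        + μ₂ (s, a) * |P₁ a s s' - P₂ a s s'| * π s' a' := by
    intro s a s' a'
    rw [hφ₁, hφ₂]
    have h1 : μ₁ (s, a) * P₁ a s s' * π s' a' - μ₂ (s, a) * P₂ a s s' * π s' a'
        = (μ₁ (s, a) - μ₂ (s, a)) * P₁ a s s' * π s' a'
          + μ₂ (s, a) * (P₁ a s s' - P₂ a s s') * π s' a' := by ring
    rw [h1]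
    calc |(μ₁ (s, a) - μ₂ (s, a)) * P₁ a s s' * π s' a'
          + μ₂ (s, a) * (P₁ a s s' - P₂ a s s') * π s' a'|
        ≤ |(μ₁ (s, a) - μ₂ (s, a)) * P₁ a s s' * π s' a'|
          + |μ₂ (s, a) * (P₁ a s s' - P₂ a s s') * π s' a'| := abs_add_le _ _
      _ = |μ₁ (s, a) - μ₂ (s, a)| * P₁ a s s' * π s' a'
          + μ₂ (s, a) * |P₁ a s s' - P₂ a s s'| * π s' a' := by
          rw [abs_mul, abs_mul, abs_mul, abs_mul,
            abs_of_nonneg (hP₁pos a s s'), abs_of_nonneg (hπpos s' a'),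
            abs_of_nonneg (hμ₂pos (s, a))]
  calc ∑ s, ∑ a, ∑ s', ∑ a', |φ₁ s a s' a' - φ₂ s a s' a'|
      ≤ ∑ s, ∑ a, ∑ s', ∑ a',
          (|μ₁ (s, a) - μ₂ (s, a)| * P₁ a s s' * π s' a'
            + μ₂ (s, a) * |P₁ a s s' - P₂ a s s'| * π s' a') := by
        refine Finset.sum_le_sum fun s _ => Finset.sum_le_sum fun a _ =>
          Finset.sum_le_sum fun s' _ => Finset.sum_le_sum fun a' _ => key s a s' a'
    _ = ∑ s, ∑ a, (|μ₁ (s, a) - μ₂ (s, a)|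
          + μ₂ (s, a) * ∑ s', |P₁ a s s' - P₂ a s s'|) := by
        refine Finset.sum_congr rfl fun s _ => Finset.sum_congr rfl fun a _ => ?_
        simp only [Finset.sum_add_distrib, ← Finset.mul_sum, hπsum, mul_one, hP₁row]
    _ ≤ ∑ s, ∑ a, (|μ₁ (s, a) - μ₂ (s, a)| + μ₂ (s, a) * M) := by
        refine Finset.sum_le_sum fun s _ => Finset.sum_le_sum fun a _ => ?_
        gcongr
        · exact hμ₂pos (s, a)
        · exact Finset.le_sup' (f := fun p : S × A =>
            ∑ s', |P₁ p.2 p.1 s' - P₂ p.2 p.1 s'|) (Finset.mem_univ (s, a))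
    _ = (∑ s, ∑ a, |μ₁ (s, a) - μ₂ (s, a)|) + M := by
        have h2 : ∑ s, ∑ a, μ₂ (s, a) = 1 := by
          rw [← Fintype.sum_prod_type]; exact hμ₂sum
        simp only [Finset.sum_add_distrib, ← Finset.sum_mul, h2, one_mul]
end
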